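/- For every t ∈ ℝ, the matrix A_t^{KFP} := (1/2)·[[ (1/2)(t − tanh(t)(1 − sinh(t)²)), sinh(t)² ], [ sinh(t)², sinh(2t) ]] is symmetric, and for t ≥ 0 it is positive semidefinite. -/

import Mathlib

open Real Matrix

lemma sinh_le_mul_cosh {t : ℝ} (ht : 0 ≤ t) : Real.sinh t ≤ t * Real.cosh t := by
  have hd : ∀ x : ℝ, HasDerivAt (fun y => y * Real.cosh y - Real.sinh y)
      (x * Real.sinh x) x := by
    intro x
    have h1 : HasDerivAt (fun y : ℝ => y * Real.cosh y)
        (1 * Real.cosh x + x * Real.sinh x) x :=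
      (hasDerivAt_id x).mul (Real.hasDerivAt_cosh x)
    have : HasDerivAt (fun y => y * Real.cosh y - Real.sinh y)
        (1 * Real.cosh x + x * Real.sinh x - Real.cosh x) x := h1.sub (Real.hasDerivAt_sinh x)
    convert this using 1
    ring
  have mono : MonotoneOn (fun y => y * Real.cosh y - Real.sinh y) (Set.Ici 0) := by
    apply monotoneOn_of_deriv_nonneg (convex_Ici 0)
    · exact ((continuous_id.mul Real.continuous_cosh).sub Real.continuous_sinh).continuousOn
    · exact fun x _ => (hd x).differentiableAt.differentiableWithinAt
    · intro x hx
      rw [(hd x).deriv]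
      have hx' : 0 < x := by simpa using hx
      exact mul_nonneg hx'.le ((Real.sinh_nonneg_iff.2 hx'.le))
  have h0 := mono (Set.self_mem_Ici) (Set.mem_Ici.2 ht) ht
  simp at h0
  linarith

theorem AtKFP_symm_posSemidef (t : ℝ)
    (A : Matrix (Fin 2) (Fin 2) ℝ)
    (hA : A = (1/2 : ℝ) •
      !![(1/2) * (t - Real.tanh t * (1 - Real.sinh t ^ 2)), Real.sinh t ^ 2;
         Real.sinh t ^ 2, Real.sinh (2 * t)]) :
    Aᵀ = A ∧ (0 ≤ t → ∀ x : Fin 2 → ℝ, 0 ≤ x ⬝ᵥ A.mulVec x) := by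
  subst hA
  constructor
  · ext i j
    fin_cases i <;> fin_cases j <;> simp
  · intro ht x
    have hc : 0 < Real.cosh t := Real.cosh_pos t
    have hs : 0 ≤ Real.sinh t := Real.sinh_nonneg_iff.2 ht
    have key : Real.sinh t ≤ t * Real.cosh t := sinh_le_mul_cosh ht
    simp [Matrix.mulVec, dotProduct, Matrix.vecHead, Matrix.vecTail, Fin.sum_univ_two,
      Real.sinh_two_mul, Real.tanh_eq_sinh_div_cosh]
    rw [show x 0 * (2⁻¹ * (2⁻¹ * (t - Real.sinh t / Real.cosh t * (1 - Real.sinh t ^ 2))) * x 0 + 2⁻¹ * Real.sinh t ^ 2 * x 1) +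
      x 1 * (2⁻¹ * Real.sinh t ^ 2 * x 0 + 2⁻¹ * (2 * Real.sinh t * Real.cosh t) * x 1)
        = ((t * Real.cosh t - Real.sinh t) * x 0 ^ 2
            + Real.sinh t * (Real.sinh t * x 0 + 2 * Real.cosh t * x 1) ^ 2)
          / (4 * Real.cosh t) from by field_simp; ring]
    apply div_nonneg _ (by positivity)
    have h1 : 0 ≤ (t * Real.cosh t - Real.sinh t) * x 0 ^ 2 :=
      mul_nonneg (by linarith) (sq_nonneg _)
    have h2 : 0 ≤ Real.sinh t * (Real.sinh t * x 0 + 2 * Real.cosh t * x 1) ^ 2 :=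
      mul_nonneg hs (sq_nonneg _)
    linarith
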